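/- Let p be a prime number, let u be a unit of ℤ_p whose residue class modulo p generates (ℤ/pℤ)ˣ, and let i and j be integers such that i − j is not divisible by p − 1. Let M be a finitely generated ℤ_p-module and N any ℤ_p-module. Then Ext¹_{ℤ_p[T,T⁻¹]}(M(i), N(j)) = 0. -/

import Mathlib

open CategoryTheory

/-- Evaluation of a Laurent polynomial over `ℤ_p` at a unit `c ∈ ℤ_pˣ`: the `ℤ_p`-algebra
homomorphism `ℤ_p[T,T⁻¹] → ℤ_p` sending `T` to `c`. -/
noncomputable def LaurentPolynomial.evalUnit (p : ℕ) [Fact p.Prime] (c : ℤ_[p]ˣ) :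
    LaurentPolynomial ℤ_[p] →+* ℤ_[p] :=
  ((AddMonoidAlgebra.lift ℤ_[p] ℤ_[p] ℤ)
    ((Units.coeHom ℤ_[p]).comp (zpowersHom ℤ_[p]ˣ c))).toRingHom

/-- Given a `ℤ_p`-module `N` and a unit `c ∈ ℤ_pˣ`, this is the `ℤ_p[T,T⁻¹]`-module structure
on `N` obtained by restriction of scalars along evaluation at `c`, i.e. `T` acts as
multiplication by `c`.  Taking `c = u ^ i` yields the module denoted `N(i)` in the paper. -/
noncomputable def twistedModule (p : ℕ) [Fact p.Prime] (N : Type*) [AddCommGroup N]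
    [Module ℤ_[p] N] (c : ℤ_[p]ˣ) : Module (LaurentPolynomial ℤ_[p]) N :=
  Module.compHom N (LaurentPolynomial.evalUnit p c)

section Aux

open Opposite Limits ZeroObject

universe v' u'

variable {R : Type u'} [CommRing R] {C : Type*} [Category.{v'} C] [Abelian C]
  [Linear R C] [EnoughProjectives C]

/-- Multiplication by a central scalar induces the same endomorphism of `Ext` through
either variable. -/
lemma ext_map_smul_eq_aux (r : R) (n : ℕ) (M N : C) :
    ((Ext R C n).map (r • 𝟙 M).op).app N = ((Ext R C n).obj (op M)).map (r • 𝟙 N) := by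
  let P : ProjectiveResolution M := ProjectiveResolution.of M
  let G := ((linearYoneda R C).obj N).rightOp
  let β : G ⟶ G := NatTrans.rightOp ((linearYoneda R C).map (r • 𝟙 N))
  let g : P.complex ⟶ P.complex := r • 𝟙 P.complex
  have w : g ≫ P.π = P.π ≫ (ChainComplex.single₀ C).map (r • 𝟙 M) := by
    apply HomologicalComplex.hom_ext
    rintro (_|k) <;> simp [g, Linear.smul_comp, Linear.comp_smul]
    erw [Linear.comp_smul, Category.comp_id]
    rfl
  have hL : ((Ext R C n).map (r • 𝟙 M).op).app N = ((G.leftDerived n).map (r • 𝟙 M)).unop := rfl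
  have hR : ((Ext R C n).obj (op M)).map (r • 𝟙 N)
      = ((NatTrans.leftDerived β n).app M).unop := rfl
  have key : (G.mapHomologicalComplex _).map g
      = (NatTrans.mapHomologicalComplex β _).app P.complex := by
    apply HomologicalComplex.hom_ext
    intro k
    simp only [Functor.mapHomologicalComplex_map_f, NatTrans.mapHomologicalComplex_app_f]
    apply Quiver.Hom.unop_inj
    ext φ
    change (r • 𝟙 (P.complex.X k)) ≫ (φ : P.complex.X k ⟶ N) = (φ : P.complex.X k ⟶ N) ≫ (r • 𝟙 N)
    erw [Linear.smul_comp, Linear.comp_smul, Category.id_comp, Category.comp_id]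
  rw [hL, hR, Functor.leftDerived_map_eq G n (r • 𝟙 M) g w,
    ProjectiveResolution.leftDerived_app_eq β P n]
  rw [Functor.comp_map, key]

/-- If a scalar kills the first argument, the induced endomorphism of higher `Ext` vanishes. -/
lemma ext_succ_map_eq_zero_aux (r : R) (n : ℕ) (M N : C)
    (h : r • 𝟙 M = 0) :
    ((Ext R C (n + 1)).map (r • 𝟙 M).op).app N = 0 := by
  have h0 : (r • 𝟙 M) = (0 : M ⟶ 0) ≫ (0 : (0 : C) ⟶ M) := by rw [h]; simp
  have hz : IsZero (((Ext R C (n + 1)).obj (op (0 : C))).obj N) := by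
    have := Functor.isZero_leftDerived_obj_projective_succ
      (((linearYoneda R C).obj N).rightOp) n (0 : C)
    exact this.unop
  rw [h0, op_comp, Functor.map_comp]
  have : ((Ext R C (n + 1)).map (0 : (0 : C) ⟶ M).op).app N = 0 :=
    hz.eq_zero_of_tgt _
  simp only [NatTrans.comp_app]
  rw [this, zero_comp]

end Aux

lemma LaurentPolynomial.evalUnit_C (p : ℕ) [Fact p.Prime] (c : ℤ_[p]ˣ) (z : ℤ_[p]) :
    LaurentPolynomial.evalUnit p c (LaurentPolynomial.C z) = z := by
  show ((AddMonoidAlgebra.lift ℤ_[p] ℤ_[p] ℤ)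
    ((Units.coeHom ℤ_[p]).comp (zpowersHom ℤ_[p]ˣ c))) (AddMonoidAlgebra.single 0 z) = z
  rw [AddMonoidAlgebra.lift_single]; simp

lemma LaurentPolynomial.evalUnit_T (p : ℕ) [Fact p.Prime] (c : ℤ_[p]ˣ) :
    LaurentPolynomial.evalUnit p c (LaurentPolynomial.T 1) = (c : ℤ_[p]) := by
  show ((AddMonoidAlgebra.lift ℤ_[p] ℤ_[p] ℤ)
    ((Units.coeHom ℤ_[p]).comp (zpowersHom ℤ_[p]ˣ c))) (AddMonoidAlgebra.single 1 1) = c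
  rw [AddMonoidAlgebra.lift_single]; simp

lemma isUnit_sub_aux (p : ℕ) [hp : Fact p.Prime] (u : ℤ_[p]ˣ)
    (hu : ∀ g : (ZMod p)ˣ,
      g ∈ Subgroup.zpowers (Units.map (PadicInt.toZMod (p := p)).toMonoidHom u))
    (i j : ℤ) (hij : ¬ ((p : ℤ) - 1) ∣ (i - j)) :
    IsUnit ((↑(u ^ j) : ℤ_[p]) - ↑(u ^ i)) := by
  set ub : (ZMod p)ˣ := Units.map (PadicInt.toZMod (p := p)).toMonoidHom u with hub
  by_contra h
  have hmem : ((↑(u ^ j) : ℤ_[p]) - ↑(u ^ i)) ∈ IsLocalRing.maximalIdeal ℤ_[p] := by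
    rwa [IsLocalRing.mem_maximalIdeal, mem_nonunits_iff]
  rw [← PadicInt.ker_toZMod, RingHom.mem_ker, map_sub, sub_eq_zero] at hmem
  have hcoe : ∀ k : ℤ, PadicInt.toZMod (↑(u ^ k) : ℤ_[p]) = ((ub ^ k : (ZMod p)ˣ) : ZMod p) := by
    intro k
    rw [hub, ← map_zpow]
    rfl
  rw [hcoe, hcoe] at hmem
  have hunits : ub ^ j = ub ^ i := Units.ext hmem
  have h1 : ub ^ (i - j) = 1 := by
    rw [zpow_sub, hunits, mul_inv_cancel]
  have hdvd : ((orderOf ub : ℕ) : ℤ) ∣ (i - j) := orderOf_dvd_iff_zpow_eq_one.mpr h1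
  have hord : orderOf ub = p - 1 := by
    rw [orderOf_eq_card_of_forall_mem_zpowers hu, Nat.card_eq_fintype_card, ZMod.card_units]
  rw [hord] at hdvd
  have : ((p - 1 : ℕ) : ℤ) = (p : ℤ) - 1 := by
    have := hp.out.one_le
    push_cast [Nat.cast_sub this]
    ring
  rw [this] at hdvd
  exact hij hdvd

/-- the unnamed Proposition of Section 6 of the paper: Let `p` be a prime, `u` a
unit of `ℤ_p` whose residue modulo `p` generates `(ℤ/pℤ)ˣ`, and `i, j` integers with `i - j`
not divisible by `p - 1`.  For `M` a finitely generated `ℤ_p`-module and `N` any `ℤ_p`-module,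
`Ext¹_{ℤ_p[T,T⁻¹]}(M(i), N(j)) = 0`. -/
theorem ext_one_twisted_eq_zero (p : ℕ) [Fact p.Prime] (u : ℤ_[p]ˣ)
    (hu : ∀ g : (ZMod p)ˣ,
      g ∈ Subgroup.zpowers (Units.map (PadicInt.toZMod (p := p)).toMonoidHom u))
    (i j : ℤ) (hij : ¬ ((p : ℤ) - 1) ∣ (i - j))
    (M : Type) [AddCommGroup M] [Module ℤ_[p] M] [Module.Finite ℤ_[p] M]
    (N : Type) [AddCommGroup N] [Module ℤ_[p] N] :
    letI : Module (LaurentPolynomial ℤ_[p]) M := twistedModule p M (u ^ i)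
    letI : Module (LaurentPolynomial ℤ_[p]) N := twistedModule p N (u ^ j)
    Subsingleton
      (((Ext (LaurentPolynomial ℤ_[p]) (ModuleCat (LaurentPolynomial ℤ_[p])) 1).obj
          (Opposite.op (ModuleCat.of (LaurentPolynomial ℤ_[p]) M))).obj
        (ModuleCat.of (LaurentPolynomial ℤ_[p]) N)) := by
  letI instM : Module (LaurentPolynomial ℤ_[p]) M := twistedModule p M (u ^ i)
  letI instN : Module (LaurentPolynomial ℤ_[p]) N := twistedModule p N (u ^ j)
  set R := LaurentPolynomial ℤ_[p]
  obtain ⟨w, hw⟩ := isUnit_sub_aux p u hu i j hij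
  set b : R := LaurentPolynomial.C ((↑(w⁻¹) : ℤ_[p])) *
    (LaurentPolynomial.T 1 - LaurentPolynomial.C ((↑(u ^ i) : ℤ_[p]))) with hb
  have evb : ∀ c : ℤ_[p]ˣ,
      LaurentPolynomial.evalUnit p c b = (↑(w⁻¹) : ℤ_[p]) * ((c : ℤ_[p]) - ↑(u ^ i)) := by
    intro c
    rw [hb, map_mul, map_sub, LaurentPolynomial.evalUnit_C, LaurentPolynomial.evalUnit_C,
      LaurentPolynomial.evalUnit_T]
  set MM := ModuleCat.of R M
  set NN := ModuleCat.of R N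
  have smulM : ∀ (r : R) (x : M), r • x = LaurentPolynomial.evalUnit p (u ^ i) r • x :=
    fun _ _ => rfl
  have smulN : ∀ (r : R) (x : N), r • x = LaurentPolynomial.evalUnit p (u ^ j) r • x :=
    fun _ _ => rfl
  have hbM : (b • 𝟙 MM : MM ⟶ MM) = 0 := by
    ext x
    show b • x = 0
    rw [smulM, evb]
    simp
  have hbN : (b • 𝟙 NN : NN ⟶ NN) = 𝟙 NN := by
    ext x
    show b • x = x
    rw [smulN, evb, ← hw, ← Units.val_mul, inv_mul_cancel, Units.val_one, one_smul]
  set E := ((Ext R (ModuleCat R) 1).obj (Opposite.op MM)).obj NN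
  have h1 : (𝟙 E : E ⟶ E) = 0 := by
    have e1 : ((Ext R (ModuleCat R) 1).obj (Opposite.op MM)).map (b • 𝟙 NN) = 0 := by
      rw [← ext_map_smul_eq_aux b 1 MM NN]
      exact ext_succ_map_eq_zero_aux b 0 MM NN hbM
    calc (𝟙 E : E ⟶ E) = ((Ext R (ModuleCat R) 1).obj (Opposite.op MM)).map (𝟙 NN) := by
          rw [CategoryTheory.Functor.map_id]
      _ = ((Ext R (ModuleCat R) 1).obj (Opposite.op MM)).map (b • 𝟙 NN) := by rw [hbN]
      _ = 0 := e1
  refine ⟨fun a b' => ?_⟩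
  have ha : ∀ a : E, a = 0 := by
    intro a
    have : (𝟙 E : E ⟶ E) a = (0 : E ⟶ E) a := by rw [h1]
    simpa using this
  rw [ha a, ha b']
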